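/- Let X ⊆ ℝⁿ be a convex set, f : X → ℝⁿ continuously differentiable with Jacobian J(x), x* ∈ X with f(x*) = 0, v ∈ ℝⁿ with v > 0 componentwise, and Θ = diag(v). If there exists c̃ > 0 such that μ₁(Θ J(x) Θ⁻¹) ≤ −c̃ for all x ∈ X, then Σᵢ vᵢ |fᵢ(x)| ≥ c̃ Σᵢ vᵢ |xᵢ − xᵢ*| for all x ∈ X. -/

import Mathlib

open Filter Topology

noncomputable section

/-- The `ℓ¹` matrix measure: `μ₁(A) = maxⱼ (Aⱼⱼ + Σ_{i≠j} |Aᵢⱼ|)`. -/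
def mu1 {n : ℕ} (A : Matrix (Fin n) (Fin n) ℝ) : ℝ :=
  ⨆ j, (A j j + ∑ i ∈ Finset.univ.erase j, |A i j|)

/-- If every column of `M` satisfies `M j j + Σ_{i≠j} |M i j| ≤ -c`, then
`‖M u‖₁ ≥ c ‖u‖₁`. -/
lemma l1_lower {n : ℕ} (M : Matrix (Fin n) (Fin n) ℝ) (u : Fin n → ℝ) (c : ℝ)
    (hM : ∀ j, M j j + ∑ i ∈ Finset.univ.erase j, |M i j| ≤ -c) :
    c * ∑ j, |u j| ≤ ∑ i, |∑ j, M i j * u j| := by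
  have hswap : ∑ j, ∑ i ∈ Finset.univ.erase j, |M i j| * |u j|
      = ∑ i, ∑ j ∈ Finset.univ.erase i, |M i j| * |u j| := by
    rw [Finset.sum_comm' (t' := Finset.univ) (s' := fun i => Finset.univ.erase i)]
    intro j i
    simp [Finset.mem_erase, eq_comm, and_comm]
  calc c * ∑ j, |u j| = ∑ j, c * |u j| := Finset.mul_sum _ _ _
    _ ≤ ∑ j, (|M j j| * |u j| - ∑ i ∈ Finset.univ.erase j, |M i j| * |u j|) := by
        apply Finset.sum_le_sum
        intro j _
        have h1 := hM j
        have h2 : c ≤ |M j j| - ∑ i ∈ Finset.univ.erase j, |M i j| := by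
          have := neg_abs_le (M j j)
          linarith
        have := mul_le_mul_of_nonneg_right h2 (abs_nonneg (u j))
        rw [sub_mul, Finset.sum_mul] at this
        linarith
    _ = ∑ j, |M j j| * |u j| - ∑ j, ∑ i ∈ Finset.univ.erase j, |M i j| * |u j| :=
        Finset.sum_sub_distrib _ _
    _ = ∑ i, |M i i| * |u i| - ∑ i, ∑ j ∈ Finset.univ.erase i, |M i j| * |u j| := by
        rw [hswap]
    _ = ∑ i, (|M i i| * |u i| - ∑ j ∈ Finset.univ.erase i, |M i j| * |u j|) :=
        (Finset.sum_sub_distrib _ _).symm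
    _ ≤ ∑ i, |∑ j, M i j * u j| := by
        apply Finset.sum_le_sum
        intro i _
        have hsplit : ∑ j, M i j * u j
            = M i i * u i + ∑ j ∈ Finset.univ.erase i, M i j * u j :=
          (Finset.add_sum_erase _ _ (Finset.mem_univ i)).symm
        have h1 : |M i i * u i| ≤ |∑ j, M i j * u j|
            + |∑ j ∈ Finset.univ.erase i, M i j * u j| := by
          have h := abs_add_le (∑ j, M i j * u j)
            (-(∑ j ∈ Finset.univ.erase i, M i j * u j))
          rw [abs_neg] at h
          nth_rewrite 1 [hsplit] at h
          rw [add_neg_cancel_right] at h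
          exact h
        have h2 : |∑ j ∈ Finset.univ.erase i, M i j * u j|
            ≤ ∑ j ∈ Finset.univ.erase i, |M i j| * |u j| := by
          refine (Finset.abs_sum_le_sum_abs _ _).trans ?_
          simp [abs_mul, le_refl]
        have habs : |M i i * u i| = |M i i| * |u i| := abs_mul _ _
        linarith

/-- If `μ₁(Θ J(x) Θ⁻¹) ≤ −c̃ < 0` on a convex set containing the equilibrium
`x*`, with `Θ = diag(v)`, then `Σᵢ vᵢ|fᵢ(x)| ≥ c̃ Σᵢ vᵢ|xᵢ − xᵢ*|`. -/
theorem flow_lower_bound {n : ℕ}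
    -- convex domain
    (X : Set (Fin n → ℝ)) (hXconv : Convex ℝ X)
    -- continuously differentiable vector field with Jacobian `J`
    (f : (Fin n → ℝ) → (Fin n → ℝ))
    (J : (Fin n → ℝ) → Matrix (Fin n) (Fin n) ℝ)
    (hf : ∀ x ∈ X, HasFDerivWithinAt f
      (LinearMap.toContinuousLinearMap (Matrix.mulVecLin (J x))) X x)
    (hJc : ContinuousOn J X)
    -- equilibrium
    (xs : Fin n → ℝ) (hxs : xs ∈ X) (heq : f xs = 0)
    -- positive weight vector
    (v : Fin n → ℝ) (hv : ∀ i, 0 < v i)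
    -- matrix measure bound with `Θ = diag v`
    (ct : ℝ) (hct : 0 < ct)
    (hμ : ∀ x ∈ X,
      mu1 (Matrix.diagonal v * J x * Matrix.diagonal fun i => (v i)⁻¹) ≤ -ct) :
    ∀ x ∈ X, ct * (∑ i, v i * |x i - xs i|) ≤ ∑ i, v i * |f x i| := by
  intro x hx
  set γ : ℝ → (Fin n → ℝ) := fun t => xs + t • (x - xs) with hγdef
  have hγ0 : γ 0 = xs := by simp [hγdef]
  have hγ1 : γ 1 = x := by simp [hγdef]
  have hγX : Set.MapsTo γ (Set.Icc (0:ℝ) 1) X := by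
    intro t ht
    have h := hXconv hxs hx (by linarith [ht.2] : (0:ℝ) ≤ 1 - t) ht.1 (by ring)
    have : γ t = (1 - t) • xs + t • x := by
      funext i
      simp [hγdef]
      ring
    rw [this]; exact h
  have hγcont : Continuous γ := by
    apply continuous_const.add
    exact (continuous_id.smul continuous_const)
  have hγderiv : ∀ t : ℝ, HasDerivAt γ (x - xs) t := by
    intro t
    have h := ((hasDerivAt_id t).smul_const (x - xs)).const_add xs
    rw [one_smul] at h; exact h
  -- derivative of f ∘ γ within Icc 0 1
  have hcomp : ∀ t ∈ Set.Icc (0:ℝ) 1, HasDerivWithinAt (fun t => f (γ t))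
      ((J (γ t)).mulVec (x - xs)) (Set.Icc (0:ℝ) 1) t := by
    intro t ht
    have h := HasFDerivWithinAt.comp_hasDerivWithinAt t
      (hf (γ t) (hγX ht)) ((hγderiv t).hasDerivWithinAt) hγX
    exact h
  -- componentwise
  have hci : ∀ (i : Fin n), ∀ t ∈ Set.Icc (0:ℝ) 1,
      HasDerivWithinAt (fun t => f (γ t) i)
        (∑ j, J (γ t) i j * (x j - xs j)) (Set.Icc (0:ℝ) 1) t := by
    intro i t ht
    have h := HasFDerivWithinAt.comp_hasDerivWithinAt t
      ((ContinuousLinearMap.proj (R := ℝ) (φ := fun _ : Fin n => ℝ) i).hasFDerivAt.hasFDerivWithinAt)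
      (hcomp t ht) (Set.mapsTo_univ _ _)
    simpa [Function.comp_def, Matrix.mulVec, dotProduct, Pi.sub_apply, mul_sub, Finset.sum_sub_distrib] using h
  -- continuity of entries along γ
  have hJent : ∀ i j : Fin n, ContinuousOn (fun t => J (γ t) i j) (Set.Icc (0:ℝ) 1) := by
    intro i j
    have h1 : ContinuousOn (fun t => J (γ t)) (Set.Icc (0:ℝ) 1) :=
      hJc.comp hγcont.continuousOn hγX
    exact ((continuous_apply j).comp (continuous_apply i)).comp_continuousOn h1
  have hIcc : Set.uIcc (0:ℝ) 1 = Set.Icc (0:ℝ) 1 := Set.uIcc_of_le (by norm_num)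
  -- integrability helpers
  have hint : ∀ i j : Fin n, IntervalIntegrable (fun t => J (γ t) i j)
      MeasureTheory.volume 0 1 := by
    intro i j
    apply ContinuousOn.intervalIntegrable
    rw [hIcc]; exact hJent i j
  -- the averaged Jacobian
  set A : Matrix (Fin n) (Fin n) ℝ :=
    Matrix.of fun i j => ∫ t in (0:ℝ)..1, J (γ t) i j with hAdef
  -- FTC
  have hA : ∀ i, f x i = ∑ j, A i j * (x j - xs j) := by
    intro i
    have hderiv' : ∀ t ∈ Set.Ioo (0:ℝ) 1, HasDerivWithinAt (fun t => f (γ t) i)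
        (∑ j, J (γ t) i j * (x j - xs j)) (Set.Ioi t) t := by
      intro t ht
      exact (hci i t ⟨ht.1.le, ht.2.le⟩).mono_of_mem_nhdsWithin
        (Icc_mem_nhdsGT_of_mem ⟨ht.1.le, ht.2⟩)
    have hcont : ContinuousOn (fun t => f (γ t) i) (Set.Icc (0:ℝ) 1) := by
      intro t ht
      exact (hci i t ht).continuousWithinAt
    have hint2 : IntervalIntegrable (fun t => ∑ j, J (γ t) i j * (x j - xs j))
        MeasureTheory.volume 0 1 := by
      apply ContinuousOn.intervalIntegrable
      rw [hIcc]
      exact continuousOn_finset_sum _ fun j _ => (hJent i j).mul continuousOn_const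
    have hftc := intervalIntegral.integral_eq_sub_of_hasDeriv_right_of_le
      (by norm_num : (0:ℝ) ≤ 1) hcont hderiv' hint2
    rw [hγ0, hγ1, heq] at hftc
    simp only [Pi.zero_apply, sub_zero] at hftc
    rw [← hftc, intervalIntegral.integral_finset_sum
      (fun j _ => (hint i j).mul_const _)]
    refine Finset.sum_congr rfl fun j _ => ?_
    rw [intervalIntegral.integral_mul_const]
    rfl
  -- weighted matrix M = Θ A Θ⁻¹
  set M : Matrix (Fin n) (Fin n) ℝ :=
    Matrix.of fun i j => v i * A i j * (v j)⁻¹ with hMdef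
  -- column bound for M
  have hMbound : ∀ j, M j j + ∑ i ∈ Finset.univ.erase j, |M i j| ≤ -ct := by
    intro j
    -- pointwise column bound
    have hcol : ∀ t ∈ Set.Icc (0:ℝ) 1,
        v j * J (γ t) j j * (v j)⁻¹
          + ∑ i ∈ Finset.univ.erase j, |v i * J (γ t) i j * (v j)⁻¹| ≤ -ct := by
      intro t ht
      have h1 := hμ (γ t) (hγX ht)
      refine le_trans ?_ h1
      have hb : BddAbove (Set.range fun j' =>
          ((Matrix.diagonal v * J (γ t) * Matrix.diagonal fun i => (v i)⁻¹) j' j'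
            + ∑ i ∈ Finset.univ.erase j',
              |(Matrix.diagonal v * J (γ t) * Matrix.diagonal fun i => (v i)⁻¹) i j'|)) :=
        Set.Finite.bddAbove (Set.finite_range _)
      have := le_ciSup hb j
      simpa [mu1, Matrix.mul_diagonal, Matrix.diagonal_mul, mul_assoc] using this
    -- entries of M as integrals of the scaled Jacobian
    have hMint : ∀ i, M i j = ∫ t in (0:ℝ)..1, v i * J (γ t) i j * (v j)⁻¹ := by
      intro i
      simp only [hMdef, Matrix.of_apply, hAdef]
      rw [intervalIntegral.integral_mul_const, intervalIntegral.integral_const_mul]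
    have hintS : ∀ i, IntervalIntegrable (fun t => v i * J (γ t) i j * (v j)⁻¹)
        MeasureTheory.volume 0 1 := fun i => ((hint i j).const_mul _).mul_const _
    have habs : ∀ i, |M i j| ≤ ∫ t in (0:ℝ)..1, |v i * J (γ t) i j * (v j)⁻¹| := by
      intro i
      rw [hMint i]
      exact intervalIntegral.abs_integral_le_integral_abs (by norm_num)
    have hintabs : ∀ i, IntervalIntegrable (fun t => |v i * J (γ t) i j * (v j)⁻¹|)
        MeasureTheory.volume 0 1 := fun i => (hintS i).abs
    have hsum : ∑ i ∈ Finset.univ.erase j, |M i j|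
        ≤ ∫ t in (0:ℝ)..1, ∑ i ∈ Finset.univ.erase j, |v i * J (γ t) i j * (v j)⁻¹| := by
      rw [intervalIntegral.integral_finset_sum (fun i _ => hintabs i)]
      exact Finset.sum_le_sum fun i _ => habs i
    have hdiag : M j j = ∫ t in (0:ℝ)..1, v j * J (γ t) j j * (v j)⁻¹ := hMint j
    have hintsum : IntervalIntegrable
        (fun t => ∑ i ∈ Finset.univ.erase j, |v i * J (γ t) i j * (v j)⁻¹|)
        MeasureTheory.volume 0 1 := by
      apply ContinuousOn.intervalIntegrable
      rw [hIcc]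
      exact continuousOn_finset_sum _ fun i _ =>
        ((continuousOn_const.mul (hJent i j)).mul continuousOn_const).abs
    have hfinal : (∫ t in (0:ℝ)..1, v j * J (γ t) j j * (v j)⁻¹)
        + (∫ t in (0:ℝ)..1, ∑ i ∈ Finset.univ.erase j, |v i * J (γ t) i j * (v j)⁻¹|)
        ≤ -ct := by
      rw [← intervalIntegral.integral_add (hintS j) hintsum]
      have := intervalIntegral.integral_mono_on (by norm_num : (0:ℝ) ≤ 1)
        ((hintS j).add hintsum)
        (intervalIntegrable_const (c := -ct)) hcol
      simpa using this
    linarith [hsum, hdiag.le, hdiag.ge]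
  -- apply the algebraic lemma with u = Θ (x - xs)
  have key := l1_lower M (fun j => v j * (x j - xs j)) ct hMbound
  have hMu : ∀ i, ∑ j, M i j * (v j * (x j - xs j)) = v i * f x i := by
    intro i
    rw [hA i, Finset.mul_sum]
    refine Finset.sum_congr rfl fun j _ => ?_
    simp only [hMdef, Matrix.of_apply]
    have hvj : v j ≠ 0 := (hv j).ne'
    field_simp
  have hlhs : ∑ j, |v j * (x j - xs j)| = ∑ j, v j * |x j - xs j| := by
    refine Finset.sum_congr rfl fun j _ => ?_
    rw [abs_mul, abs_of_pos (hv j)]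
  have hrhs : ∑ i, |∑ j, M i j * (v j * (x j - xs j))| = ∑ i, v i * |f x i| := by
    refine Finset.sum_congr rfl fun i _ => ?_
    rw [hMu i, abs_mul, abs_of_pos (hv i)]
  rw [hlhs, hrhs] at key
  exact key

end
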